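/- Let (X,d,μ) be a space of homogeneous type, let p(·), q(·) ∈ 𝒫₁(X) satisfy 1/p(x) − 1/q(x) ≡ η for a constant η ∈ [0,1), and let ω ∈ A_{p(·),q(·)}(X). Then there is a constant C depending only on p(·), q(·) and η (the paper obtains C = 16) such that for every ball B ⊆ X and every measurable subset E ⊆ B, (μ(E)/μ(B))^{1−η} ≤ C·[ω]_{A_{p(·),q(·)}} · ‖ω χ_E‖_{q(·)} / ‖ω χ_B‖_{q(·)}. -/

import Mathlib

open MeasureTheory ENNReal Set Filter Topology

noncomputable section

variable {X : Type*}

/-- `d` is a quasi-metric on `X` with quasi-triangle constant `A0`. -/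
def IsQuasiMetric (d : X → X → ℝ) (A0 : ℝ) : Prop :=
  1 ≤ A0 ∧ (∀ x y, 0 ≤ d x y) ∧ (∀ x y, d x y = 0 ↔ x = y) ∧
    (∀ x y, d x y = d y x) ∧ ∀ x y z, d x y ≤ A0 * (d x z + d z y)

/-- The quasi-metric ball `B(c,r)`. -/
def qball (d : X → X → ℝ) (c : X) (r : ℝ) : Set X := {y | d c y < r}

/-- The measure `μ` is doubling (with constant `Cμ`) on quasi-metric balls:
`0 < μ(B(x,2r)) ≤ Cμ·μ(B(x,r)) < ∞`. -/
def IsDoubling [MeasurableSpace X] (d : X → X → ℝ) (μ : Measure X) (Cμ : ℝ≥0∞) : Prop :=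
  1 ≤ Cμ ∧ ∀ (x : X) (r : ℝ), 0 < r →
    0 < μ (qball d x (2 * r)) ∧ μ (qball d x (2 * r)) ≤ Cμ * μ (qball d x r) ∧
      Cμ * μ (qball d x r) < ∞

/-- The Luxemburg norm `‖f‖_{p(·)}` for a variable (possibly infinite) exponent `p`. -/
def luxNorm [MeasurableSpace X] (μ : Measure X) (p : X → ℝ≥0∞) (f : X → ℝ≥0∞) : ℝ≥0∞ :=
  sInf {lam : ℝ≥0∞ | 0 < lam ∧
    (∫⁻ x in {x | p x ≠ ∞}, (f x / lam) ^ (p x).toReal ∂μ) +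
      essSup (fun x => f x / lam) (μ.restrict {x | p x = ∞}) ≤ 1}

/-- The class `𝒫₁(X)`: exponents with values in `[1,∞)` and `p₊ < ∞`. -/
def MemP1 [MeasurableSpace X] (μ : Measure X) (p : X → ℝ≥0∞) : Prop :=
  Measurable p ∧ (∀ x, 1 ≤ p x) ∧ (∀ x, p x ≠ ∞) ∧ essSup p μ < ∞

/-- The class `𝒫(X)`: additionally `1 < p₋`. -/
def MemP [MeasurableSpace X] (μ : Measure X) (p : X → ℝ≥0∞) : Prop :=
  MemP1 μ p ∧ 1 < essInf p μ

/-- Local log-Hölder continuity `LH₀`. -/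
def MemLH0 (d : X → X → ℝ) (p : X → ℝ≥0∞) : Prop :=
  ∃ C0 : ℝ, 0 ≤ C0 ∧ ∀ x y, d x y < 1 / 2 →
    |(p x).toReal - (p y).toReal| ≤ C0 / Real.log (Real.exp 1 + 1 / d x y)

/-- Log-Hölder decay at infinity `LH_∞` with base point `x0` and limit value `pinf`. -/
def MemLHinf (d : X → X → ℝ) (x0 : X) (pinf : ℝ) (p : X → ℝ≥0∞) : Prop :=
  ∃ Cinf : ℝ, 0 ≤ Cinf ∧ ∀ x, |(p x).toReal - pinf| ≤ Cinf / Real.log (Real.exp 1 + d x x0)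

/-- Global log-Hölder continuity `LH = LH₀ ∩ LH_∞`. -/
def MemLH (d : X → X → ℝ) (p : X → ℝ≥0∞) : Prop :=
  MemLH0 d p ∧ ∃ x0 pinf, MemLHinf d x0 pinf p

/-- `w` is a weight: measurable, positive and finite a.e., and locally integrable. -/
def IsWeight [MeasurableSpace X] (d : X → X → ℝ) (μ : Measure X) (w : X → ℝ≥0∞) : Prop :=
  Measurable w ∧ (∀ᵐ x ∂μ, 0 < w x ∧ w x < ∞) ∧
    ∀ (c : X) (r : ℝ), 0 < r → ∫⁻ x in qball d c r, w x ∂μ < ∞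

/-- The pointwise conjugate exponent `p′(·)`, `1/p(x) + 1/p′(x) = 1`. -/
def conjExp (p : X → ℝ≥0∞) : X → ℝ≥0∞ := fun x => if p x = ∞ then 1 else p x / (p x - 1)

/-- The `A_{p(·),q(·)}` characteristic constant
`sup_B μ(B)^{η−1} ‖w χ_B‖_{q(·)} ‖w⁻¹ χ_B‖_{p′(·)}`. -/
def ApqConst [MeasurableSpace X] (d : X → X → ℝ) (μ : Measure X) (η : ℝ)
    (p q : X → ℝ≥0∞) (w : X → ℝ≥0∞) : ℝ≥0∞ :=
  ⨆ (c : X) (r : ℝ) (_ : 0 < r),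
    μ (qball d c r) ^ (η - 1) * luxNorm μ q ((qball d c r).indicator w) *
      luxNorm μ (conjExp p) ((qball d c r).indicator fun x => (w x)⁻¹)

/-- The fractional maximal operator `M_η`. -/
def fracMax [MeasurableSpace X] (d : X → X → ℝ) (μ : Measure X) (η : ℝ)
    (f : X → ℝ≥0∞) (x : X) : ℝ≥0∞ :=
  ⨆ (c : X) (r : ℝ) (_ : 0 < r) (_ : x ∈ qball d c r),
    μ (qball d c r) ^ (η - 1) * ∫⁻ y in qball d c r, f y ∂μ

/-- The Muckenhoupt `A₁` condition: `Mw ≤ C w` a.e. -/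
def MemA1 [MeasurableSpace X] (d : X → X → ℝ) (μ : Measure X) (w : X → ℝ≥0∞) : Prop :=
  ∃ C : ℝ≥0∞, C ≠ ∞ ∧ ∀ᵐ x ∂μ, fracMax d μ 0 w x ≤ C * w x

/-- The Muckenhoupt `A_p` condition for `1 < p < ∞`. -/
def MemAp [MeasurableSpace X] (d : X → X → ℝ) (μ : Measure X) (p : ℝ)
    (w : X → ℝ≥0∞) : Prop :=
  (⨆ (c : X) (r : ℝ) (_ : 0 < r),
    ((μ (qball d c r))⁻¹ * ∫⁻ x in qball d c r, w x ∂μ) *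
      ((μ (qball d c r))⁻¹ * ∫⁻ x in qball d c r, w x ^ (-(1 / (p - 1))) ∂μ) ^ (p - 1)) ≠ ∞

/-- The class `A_∞ = ⋃_{p ≥ 1} A_p`. -/
def MemAinfty [MeasurableSpace X] (d : X → X → ℝ) (μ : Measure X) (w : X → ℝ≥0∞) : Prop :=
  MemA1 d μ w ∨ ∃ p : ℝ, 1 < p ∧ MemAp d μ p w



lemma ennreal_young2 (a b : ℝ≥0∞) {s t : ℝ} (hs : 1 < s) (hsum : 1/s + 1/t = 1) :
    a * b ≤ a ^ s + b ^ t := by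
  have h : s.HolderConjugate t := Real.holderConjugate_iff.mpr ⟨hs, by rw [← one_div, ← one_div]; exact hsum⟩
  refine (ENNReal.young_inequality a b h).trans (add_le_add ?_ ?_)
  · calc a ^ s / ENNReal.ofReal s ≤ a ^ s / 1 := by
          gcongr
          exact ENNReal.one_le_ofReal.2 hs.le
      _ = a ^ s := by simp
  · calc b ^ t / ENNReal.ofReal t ≤ b ^ t / 1 := by
          gcongr
          exact ENNReal.one_le_ofReal.2 h.symm.lt.le
      _ = b ^ t := by simp

lemma ennreal_young3 (a b c : ℝ≥0∞) {s t u : ℝ} (hs : 1 < s) (ht : 1 < t) (hu : 1 < u)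
    (hsum : 1/s + 1/t + 1/u = 1) : a * b * c ≤ a ^ s + b ^ t + c ^ u := by
  have hs0 : (0:ℝ) < s := by linarith
  have ht0 : (0:ℝ) < t := by linarith
  have hu0 : (0:ℝ) < u := by linarith
  set s' : ℝ := s / (s - 1) with hs'def
  have hs1 : (0:ℝ) < s - 1 := by linarith
  have hs'0 : (0:ℝ) < s' := by positivity
  have hs'1 : 1 < s' := by
    rw [hs'def, lt_div_iff₀ hs1]; linarith
  have h1 : 1/s + 1/s' = 1 := by
    rw [hs'def]; field_simp; ring
  have e1 : s' * (1/s') = 1 := mul_one_div_cancel hs'0.ne'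
  have h2' : 1/s' = 1/t + 1/u := by linarith
  have e2 : s' * (1/t) + s' * (1/u) = 1 := by rw [← mul_add, ← h2']; exact e1
  have pt : 0 < s' * (1/t) := by positivity
  have pu : 0 < s' * (1/u) := by positivity
  have hts' : 1 < t / s' := by
    rw [lt_div_iff₀ hs'0]
    nlinarith [mul_one_div_cancel ht0.ne']
  have hus' : 1 < u / s' := by
    rw [lt_div_iff₀ hs'0]
    nlinarith [mul_one_div_cancel hu0.ne']
  have h2 : 1/(t/s') + 1/(u/s') = 1 := by
    rw [one_div_div, one_div_div]
    calc s'/t + s'/u = s' * (1/t) + s' * (1/u) := by ring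
      _ = 1 := e2
  calc a * b * c = a * (b * c) := by ring
    _ ≤ a ^ s + (b * c) ^ s' := ennreal_young2 _ _ hs h1
    _ = a ^ s + (b ^ s') * (c ^ s') := by rw [ENNReal.mul_rpow_of_nonneg _ _ hs'0.le]
    _ ≤ a ^ s + ((b ^ s') ^ (t/s') + (c ^ s') ^ (u/s')) :=
        add_le_add le_rfl (ennreal_young2 _ _ hts' h2)
    _ = a ^ s + (b ^ t + c ^ u) := by
        rw [← ENNReal.rpow_mul, ← ENNReal.rpow_mul]
        congr 2 <;> field_simp
    _ = a ^ s + b ^ t + c ^ u := by ring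

/-- The admissible set for the Luxemburg norm. -/
def luxSet [MeasurableSpace X] (μ : Measure X) (p : X → ℝ≥0∞) (f : X → ℝ≥0∞) : Set ℝ≥0∞ :=
  {lam : ℝ≥0∞ | 0 < lam ∧
    (∫⁻ x in {x | p x ≠ ∞}, (f x / lam) ^ (p x).toReal ∂μ) +
      essSup (fun x => f x / lam) (μ.restrict {x | p x = ∞}) ≤ 1}

lemma luxNorm_eq_sInf [MeasurableSpace X] (μ : Measure X) (p : X → ℝ≥0∞) (f : X → ℝ≥0∞) :
    luxNorm μ p f = sInf (luxSet μ p f) := rfl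

lemma luxSet_mem_of_le [MeasurableSpace X] {μ : Measure X} {p f : X → ℝ≥0∞} {lam lam' : ℝ≥0∞}
    (h : lam ∈ luxSet μ p f) (hle : lam ≤ lam') : lam' ∈ luxSet μ p f := by
  obtain ⟨h0, h1⟩ := h
  refine ⟨lt_of_lt_of_le h0 hle, le_trans (add_le_add ?_ ?_) h1⟩
  · refine lintegral_mono fun x => ?_
    exact ENNReal.rpow_le_rpow (ENNReal.div_le_div_left hle _) ENNReal.toReal_nonneg
  · exact essSup_mono_ae (Eventually.of_forall fun x => ENNReal.div_le_div_left hle _)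

lemma luxNorm_mono [MeasurableSpace X] {μ : Measure X} {p f g : X → ℝ≥0∞}
    (h : ∀ x, f x ≤ g x) : luxNorm μ p f ≤ luxNorm μ p g := by
  refine sInf_le_sInf fun lam hlam => ?_
  obtain ⟨h0, h1⟩ := hlam
  refine ⟨h0, le_trans (add_le_add ?_ ?_) h1⟩
  · refine lintegral_mono fun x => ?_
    exact ENNReal.rpow_le_rpow (ENNReal.div_le_div_right (h x) _) ENNReal.toReal_nonneg
  · exact essSup_mono_ae (Eventually.of_forall fun x => ENNReal.div_le_div_right (h x) _)

lemma two_mul_luxNorm_mem [MeasurableSpace X] {μ : Measure X} {p f : X → ℝ≥0∞}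
    (h0 : 0 < luxNorm μ p f) (hfin : luxNorm μ p f ≠ ∞) :
    2 * luxNorm μ p f ∈ luxSet μ p f := by
  have hlt : luxNorm μ p f < 2 * luxNorm μ p f := by
    conv_lhs => rw [← one_mul (luxNorm μ p f)]
    exact ENNReal.mul_lt_mul_left h0.ne' hfin one_lt_two
  rw [luxNorm_eq_sInf] at hlt
  obtain ⟨lam, hlam, hlam'⟩ := sInf_lt_iff.1 hlt
  exact luxSet_mem_of_le hlam hlam'.le

lemma luxNorm_pos [MeasurableSpace X] {μ : Measure X} {P f : X → ℝ≥0∞}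
    (hP1 : ∀ x, 1 ≤ P x) (hSm : MeasurableSet {x | P x = ∞}) (hf : Measurable f)
    {δ : ℝ≥0∞} (hδ0 : 0 < δ) (hδ1 : δ ≤ 1) (hT : 0 < μ {x | δ ≤ f x}) :
    0 < luxNorm μ P f := by
  set T : Set X := {x | δ ≤ f x} with hTdef
  have hTm : MeasurableSet T := hf measurableSet_Ici
  have hδtop : δ ≠ ∞ := (lt_of_le_of_lt hδ1 ENNReal.one_lt_top).ne
  have hsplit : 0 < μ (T ∩ {x | P x = ∞}) ∨ 0 < μ (T \ {x | P x = ∞}) := by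
    by_contra h
    push_neg at h
    obtain ⟨h1, h2⟩ := h
    have : μ T = 0 := by
      have : μ T ≤ μ (T ∩ {x | P x = ∞}) + μ (T \ {x | P x = ∞}) := by
        refine (measure_mono ?_).trans (measure_union_le _ _)
        intro x hx; by_cases hxP : P x = ∞
        · exact Or.inl ⟨hx, hxP⟩
        · exact Or.inr ⟨hx, hxP⟩
      simpa [le_zero_iff.1 h1, le_zero_iff.1 h2] using this
    exact absurd this hT.ne'
  rcases hsplit with hm | hm
  · -- use essSup part : every lam in luxSet satisfies δ ≤ lam
    refine lt_of_lt_of_le hδ0 (le_sInf fun lam hlam => ?_)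
    obtain ⟨hl0, hl1⟩ := hlam
    by_cases hltop : lam = ∞
    · simp [hltop, le_top]
    have hess : essSup (fun x => f x / lam) (μ.restrict {x | P x = ∞}) ≤ 1 :=
      le_trans (le_add_self) hl1
    by_contra hcon
    push_neg at hcon
    -- δ/lam > 1 on a set of positive restricted measure
    have hae : ∀ᵐ x ∂(μ.restrict {x | P x = ∞}), f x / lam ≤ 1 :=
      (ae_le_essSup _).mono fun x hx => le_trans hx hess
    have hpos : 0 < μ.restrict {x | P x = ∞} T := by
      rw [Measure.restrict_apply hTm]
      exact hm.trans_le (measure_mono (inter_comm _ _ ▸ le_rfl))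
    have : ∃ x, x ∈ T ∧ f x / lam ≤ 1 := by
      by_contra hno
      push_neg at hno
      have : μ.restrict {x | P x = ∞} T = 0 := by
        refine measure_eq_zero_iff_ae_notMem.2 ?_
        filter_upwards [hae] with x hx hxT
        exact absurd hx (by simpa using (hno x hxT))
      exact absurd this hpos.ne'
    obtain ⟨x, hxT, hx1⟩ := this
    have : δ / lam ≤ 1 := le_trans (ENNReal.div_le_div_right hxT _) hx1
    rw [ENNReal.div_le_iff_le_mul (Or.inl hl0.ne') (Or.inl hltop), one_mul] at this
    exact absurd this (not_le.2 hcon)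
  · -- use integral part
    set m := μ (T \ {x | P x = ∞}) with hmdef
    refine lt_of_lt_of_le (b := min (δ * m) δ)
      (lt_min (ENNReal.mul_pos hδ0.ne' hm.ne') hδ0) (le_sInf fun lam hlam => ?_)
    obtain ⟨hl0, hl1⟩ := hlam
    by_contra hcon
    push_neg at hcon
    have hlδ : lam < δ := lt_of_lt_of_le hcon (min_le_right _ _)
    have hlδm : lam < δ * m := lt_of_lt_of_le hcon (min_le_left _ _)
    have hlamtop : lam ≠ ∞ := (hlδ.trans_le le_top).ne
    have hint : ∫⁻ x in {x | P x ≠ ∞}, (f x / lam) ^ (P x).toReal ∂μ ≤ 1 :=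
      le_trans (le_add_right le_rfl) hl1
    have hTsub : T \ {x | P x = ∞} ⊆ {x | P x ≠ ∞} := fun x hx => hx.2
    have hbound : ∫⁻ x in T \ {x | P x = ∞}, (δ / lam) ∂μ ≤
        ∫⁻ x in {x | P x ≠ ∞}, (f x / lam) ^ (P x).toReal ∂μ := by
      refine le_trans ?_ (lintegral_mono' (Measure.restrict_mono hTsub le_rfl) le_rfl)
      refine lintegral_mono_ae ?_
      refine (ae_restrict_iff' (hTm.diff hSm)).2 (Eventually.of_forall fun x hx => ?_)
      have h1le : (1:ℝ≥0∞) ≤ f x / lam := by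
        have : δ / lam ≤ f x / lam := ENNReal.div_le_div_right hx.1 _
        refine le_trans ?_ this
        rw [ENNReal.le_div_iff_mul_le (Or.inl hl0.ne') (Or.inl hlamtop)]
        simpa using hlδ.le
      calc δ / lam ≤ f x / lam := ENNReal.div_le_div_right hx.1 _
        _ = (f x / lam) ^ (1:ℝ) := (ENNReal.rpow_one _).symm
        _ ≤ (f x / lam) ^ (P x).toReal := by
            refine ENNReal.rpow_le_rpow_of_exponent_le h1le ?_
            rw [show (1:ℝ) = (1:ℝ≥0∞).toReal by simp]
            exact ENNReal.toReal_mono hx.2 (hP1 x)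
    rw [setLIntegral_const] at hbound
    have hgt : 1 < δ / lam * m := by
      rw [div_eq_mul_inv, mul_right_comm, ← div_eq_mul_inv,
        ENNReal.lt_div_iff_mul_lt (Or.inl hl0.ne') (Or.inl hlamtop), one_mul]
      exact hlδm
    exact absurd (hbound.trans hint) (not_le.2 hgt)


lemma exists_pos_level {X : Type*} [MeasurableSpace X] {μ : Measure X} {f : X → ℝ≥0∞}
    (hae : ∀ᵐ x ∂μ, 0 < f x) {S : Set X} (hS : 0 < μ S) :
    ∃ δ : ℝ≥0∞, 0 < δ ∧ δ ≤ 1 ∧ 0 < μ {x | δ ≤ S.indicator f x} := by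
  by_contra hcon
  push_neg at hcon
  have hn : ∀ n : ℕ, μ (S ∩ {x | ((n : ℝ≥0∞) + 1)⁻¹ ≤ f x}) = 0 := by
    intro n
    have hδ0 : (0:ℝ≥0∞) < ((n : ℝ≥0∞) + 1)⁻¹ := ENNReal.inv_pos.2 (by simp)
    have hδ1 : ((n : ℝ≥0∞) + 1)⁻¹ ≤ 1 := ENNReal.inv_le_one.2 le_add_self
    have h := hcon _ hδ0 hδ1
    refine le_antisymm (le_trans (measure_mono ?_) (le_of_eq (le_antisymm h (zero_le))))
      (zero_le)
    intro x hx
    have : S.indicator f x = f x := Set.indicator_of_mem hx.1 f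
    simpa [Set.mem_setOf_eq, this] using hx.2
  have hcover : S ∩ {x | 0 < f x} ⊆ ⋃ n : ℕ, S ∩ {x | ((n : ℝ≥0∞) + 1)⁻¹ ≤ f x} := by
    rintro x ⟨hxS, hxf⟩
    obtain ⟨n, hn'⟩ := ENNReal.exists_inv_nat_lt (a := f x) hxf.ne'
    refine Set.mem_iUnion.2 ⟨n, hxS, ?_⟩
    calc ((n : ℝ≥0∞) + 1)⁻¹ ≤ ((n : ℝ≥0∞))⁻¹ := ENNReal.inv_le_inv.2 (le_add_right le_rfl)
      _ ≤ f x := hn'.le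
  have hzero : μ (S ∩ {x | 0 < f x}) = 0 :=
    measure_mono_null hcover (measure_iUnion_null hn)
  have hfc : μ {x | ¬ 0 < f x} = 0 := by
    rw [← MeasureTheory.ae_iff]
    exact hae
  have : μ S ≤ 0 := by
    calc μ S ≤ μ ((S ∩ {x | 0 < f x}) ∪ {x | ¬ 0 < f x}) := by
          refine measure_mono fun x hx => ?_
          by_cases h : 0 < f x
          · exact Or.inl ⟨hx, h⟩
          · exact Or.inr h
      _ ≤ μ (S ∩ {x | 0 < f x}) + μ {x | ¬ 0 < f x} := measure_union_le _ _
      _ = 0 := by rw [hzero, hfc, add_zero]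
  exact absurd (le_antisymm this (zero_le)) hS.ne'
/-- conjugate exponent set identification -/
lemma conjExp_eq_top_iff {p : X → ℝ≥0∞} (hp1 : ∀ x, 1 ≤ p x) (hpfin : ∀ x, p x ≠ ∞) (x : X) :
    conjExp p x = ∞ ↔ p x = 1 := by
  rw [conjExp, if_neg (hpfin x), ENNReal.div_eq_top]
  constructor
  · rintro (⟨-, h⟩ | ⟨h, -⟩)
    · exact le_antisymm (tsub_eq_zero_iff_le.1 h) (hp1 x)
    · exact absurd h (hpfin x)
  · rintro h
    exact Or.inl ⟨by simp [h], by simp [h]⟩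

lemma conjExp_toReal {p : X → ℝ≥0∞} (hpfin : ∀ x, p x ≠ ∞) {x : X} (hx : 1 < p x) :
    (conjExp p x).toReal = (p x).toReal / ((p x).toReal - 1) := by
  rw [conjExp, if_neg (hpfin x), ENNReal.toReal_div, ENNReal.toReal_sub_of_le hx.le (hpfin x),
    ENNReal.toReal_one]

lemma one_le_conjExp {p : X → ℝ≥0∞} (hp1 : ∀ x, 1 ≤ p x) (x : X) : 1 ≤ conjExp p x := by
  rw [conjExp]
  split_ifs with h
  · exact le_refl 1
  · have h0 : p x ≠ 0 := fun h0 => by simpa [h0] using hp1 x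
    rw [ENNReal.le_div_iff_mul_le (Or.inr h0) (Or.inl (ne_top_of_le_ne_top h tsub_le_self)),
      one_mul]
    exact tsub_le_self

/-- The key Hölder-type inequality. -/
lemma key_ineq [MeasurableSpace X] {μ : Measure X} {p q ω : X → ℝ≥0∞}
    {η : ℝ} (hη0 : 0 ≤ η) (hη1 : η < 1)
    (hp1 : ∀ x, 1 ≤ p x) (hpfin : ∀ x, p x ≠ ∞)
    (hq1 : ∀ x, 1 ≤ q x) (hqfin : ∀ x, q x ≠ ∞)
    (hpq : ∀ x, (p x)⁻¹ = (q x)⁻¹ + ENNReal.ofReal η)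
    (hωmeas : Measurable ω) (hωae : ∀ᵐ x ∂μ, 0 < ω x ∧ ω x < ∞)
    (hqmeas : Measurable q) (hpmeas : Measurable p)
    {B E : Set X} (hBm : MeasurableSet B) (hEm : MeasurableSet E) (hEB : E ⊆ B)
    (hμE0 : 0 < μ E) (hμEfin : μ E ≠ ∞)
    {lam1 lam2 : ℝ≥0∞} (h1 : lam1 ∈ luxSet μ q (E.indicator ω))
    (h2 : lam2 ∈ luxSet μ (conjExp p) (B.indicator fun x => (ω x)⁻¹))
    (hl1fin : lam1 ≠ ∞) (hl2fin : lam2 ≠ ∞) :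
    μ E ≤ 3 * (lam1 * lam2 * μ E ^ η) := by
  obtain ⟨hl10, hmod1⟩ := h1
  obtain ⟨hl20, hmod2⟩ := h2
  -- basic exponent-set facts
  have hqset : {x : X | q x ≠ ∞} = univ := eq_univ_of_forall fun x => hqfin x
  have hpset : {x : X | conjExp p x = ∞} = {x : X | p x = 1} := by
    ext x; exact conjExp_eq_top_iff hp1 hpfin x
  have hpsetc : {x : X | conjExp p x ≠ ∞} = {x : X | p x ≠ 1} := by
    ext x; simp only [mem_setOf_eq, not_iff_not]; exact conjExp_eq_top_iff hp1 hpfin x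
  have hp1m : MeasurableSet {x : X | p x = 1} := hpmeas (measurableSet_singleton 1)
  have hp1mc : MeasurableSet {x : X | p x ≠ 1} := hp1m.compl
  -- modular bounds
  have I₁ : ∫⁻ x, ((E.indicator ω x) / lam1) ^ (q x).toReal ∂μ ≤ 1 := by
    have := le_trans (le_add_right le_rfl) hmod1
    rwa [hqset, Measure.restrict_univ] at this
  have I₂ : ∫⁻ x in {x : X | p x ≠ 1},
      ((B.indicator (fun y => (ω y)⁻¹) x) / lam2) ^ (conjExp p x).toReal ∂μ ≤ 1 := by
    have := le_trans (le_add_right le_rfl) hmod2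
    rwa [hpsetc] at this
  have G : ∀ᵐ x ∂μ, x ∈ {x : X | p x = 1} →
      (B.indicator (fun y => (ω y)⁻¹) x) / lam2 ≤ 1 := by
    have hess : essSup (fun x => (B.indicator (fun y => (ω y)⁻¹) x) / lam2)
        (μ.restrict {x : X | conjExp p x = ∞}) ≤ 1 := le_trans le_add_self hmod2
    have hae := (ae_le_essSup (μ := μ.restrict {x : X | conjExp p x = ∞})
      (fun x => (B.indicator (fun y => (ω y)⁻¹) x) / lam2)).mono
      (fun x hx => le_trans hx hess)
    rw [hpset] at hae
    exact (ae_restrict_iff' hp1m).1 hae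
  -- notation
  set T : ℝ≥0∞ := μ E ^ η with hTdef
  have hT0 : T ≠ 0 := (ENNReal.rpow_pos hμE0 hμEfin).ne'
  have hTfin : T ≠ ∞ := ENNReal.rpow_ne_top_of_nonneg hη0 hμEfin
  set c0 : ℝ≥0∞ := μ E ^ (-η) with hc0def
  have hc00 : c0 ≠ 0 := (ENNReal.rpow_pos hμE0 hμEfin).ne'
  have hc0fin : c0 ≠ ∞ := by
    rw [hc0def, ENNReal.rpow_neg]
    exact ENNReal.inv_ne_top.2 (ENNReal.rpow_pos hμE0 hμEfin).ne'
  set D : ℝ≥0∞ := if η = 0 then 0 else c0 ^ (1/η) with hDdef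
  -- toReal facts
  have hQ1 : ∀ x, 1 ≤ (q x).toReal := fun x => by
    rw [show (1:ℝ) = (1:ℝ≥0∞).toReal by simp]
    exact ENNReal.toReal_mono (hqfin x) (hq1 x)
  have hP1 : ∀ x, 1 ≤ (p x).toReal := fun x => by
    rw [show (1:ℝ) = (1:ℝ≥0∞).toReal by simp]
    exact ENNReal.toReal_mono (hpfin x) (hp1 x)
  have hPQ : ∀ x, ((p x).toReal)⁻¹ = ((q x).toReal)⁻¹ + η := by
    intro x
    have hq0 : q x ≠ 0 := fun h0 => by simpa [h0] using hq1 x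
    have h1 : ((p x)⁻¹).toReal = ((q x)⁻¹ + ENNReal.ofReal η).toReal := by rw [hpq x]
    rwa [ENNReal.toReal_add (ENNReal.inv_ne_top.2 hq0) ENNReal.ofReal_ne_top,
      ENNReal.toReal_inv, ENNReal.toReal_inv, ENNReal.toReal_ofReal hη0] at h1
  -- pointwise claim
  have claim : ∀ᵐ x ∂μ, x ∈ E →
      (ω x / lam1) * ((ω x)⁻¹ / lam2) * c0 ≤
        (ω x / lam1) ^ (q x).toReal +
          ({x : X | p x ≠ 1}.indicator (fun y => ((ω y)⁻¹ / lam2) ^ (conjExp p y).toReal) x + D) := by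
    filter_upwards [G] with x hG hxE
    set a : ℝ≥0∞ := ω x / lam1
    set b : ℝ≥0∞ := (ω x)⁻¹ / lam2
    have hQx : ((q x).toReal)⁻¹ + η ≤ 1 := by
      rw [← hPQ x]
      rw [inv_le_one_iff₀]; right; exact hP1 x
    by_cases hpx : p x = 1
    · -- b ≤ 1
      have hb1 : b ≤ 1 := by
        have := hG hpx
        rwa [indicator_of_mem (hEB hxE)] at this
      have hind : ({x : X | p x ≠ 1}.indicator
          (fun y => ((ω y)⁻¹ / lam2) ^ (conjExp p y).toReal) x) = 0 :=
        indicator_of_notMem (by simpa using hpx) _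
      rw [hind, zero_add]
      have step1 : a * b * c0 ≤ a * c0 := by
        calc a * b * c0 ≤ a * 1 * c0 := by gcongr
          _ = a * c0 := by rw [mul_one]
      refine le_trans step1 ?_
      have hrel : ((q x).toReal)⁻¹ + η = 1 := by
        have := hPQ x
        rw [hpx] at this; simpa using this.symm
      by_cases hη : η = 0
      · -- q x = 1
        have hq1x : (q x).toReal = 1 := by
          rw [hη, add_zero] at hrel
          exact (inv_eq_one.1 hrel)
        have hc01 : c0 = 1 := by rw [hc0def, hη, neg_zero, ENNReal.rpow_zero]
        rw [hc01, mul_one, hq1x, ENNReal.rpow_one]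
        exact le_add_right le_rfl
      · have hηpos : 0 < η := lt_of_le_of_ne hη0 (Ne.symm hη)
        have hQgt : 1 < (q x).toReal := by
          have hQ0 : 0 < (q x).toReal := by linarith [hQ1 x]
          have e : (q x).toReal * ((q x).toReal)⁻¹ = 1 := mul_inv_cancel₀ hQ0.ne'
          nlinarith
        have hD : D = c0 ^ (1/η) := by rw [hDdef, if_neg hη]
        rw [hD]
        refine ennreal_young2 a c0 hQgt ?_
        rw [one_div_one_div, one_div]
        exact hrel
    · -- p x > 1
      have hpgt : 1 < p x := lt_of_le_of_ne (hp1 x) (Ne.symm hpx)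
      have hPgt : 1 < (p x).toReal := by
        rw [show (1:ℝ) = (1:ℝ≥0∞).toReal by simp]
        exact ENNReal.toReal_strict_mono (hpfin x) hpgt
      set P : ℝ := (p x).toReal
      set Q : ℝ := (q x).toReal
      have ht : (conjExp p x).toReal = P / (P - 1) := conjExp_toReal hpfin hpgt
      have hP0 : (0:ℝ) < P - 1 := by linarith
      have htgt : 1 < P / (P - 1) := by rw [lt_div_iff₀ hP0]; linarith
      have hQgt : 1 < Q := by
        have h := hPQ x
        have hP0' : (0:ℝ) < P := by linarith
        have eP : P * P⁻¹ = 1 := mul_inv_cancel₀ hP0'.ne'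
        have hPlt : P⁻¹ < 1 := by nlinarith
        have hQinv : Q⁻¹ < 1 := by
          have : Q⁻¹ ≤ P⁻¹ := by rw [h]; linarith
          linarith
        have hQ0 : 0 < Q := by linarith [hQ1 x]
        have e : Q * Q⁻¹ = 1 := mul_inv_cancel₀ hQ0.ne'
        nlinarith
      have hind : ({x : X | p x ≠ 1}.indicator
          (fun y => ((ω y)⁻¹ / lam2) ^ (conjExp p y).toReal) x) = b ^ (conjExp p x).toReal :=
        indicator_of_mem (by simpa using hpx) _
      rw [hind, ht]
      by_cases hη : η = 0
      · have hc01 : c0 = 1 := by rw [hc0def, hη, neg_zero, ENNReal.rpow_zero]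
        have hQP : Q = P := by
          have h := hPQ x
          rw [hη, add_zero] at h
          exact (inv_injective h).symm
        rw [hc01, mul_one]
        have hsum : 1/Q + 1/(P/(P-1)) = 1 := by
          rw [hQP, one_div_div]; field_simp; ring
        exact le_trans (ennreal_young2 a b hQgt hsum) (by
          refine add_le_add le_rfl (le_add_right le_rfl))
      · have hηpos : 0 < η := lt_of_le_of_ne hη0 (Ne.symm hη)
        have hD : D = c0 ^ (1/η) := by rw [hDdef, if_neg hη]
        have hugt : 1 < 1/η := by rw [lt_div_iff₀ hηpos]; linarith
        have hsum : 1/Q + 1/(P/(P-1)) + 1/(1/η) = 1 := by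
          have h := hPQ x
          rw [one_div_one_div, one_div_div]
          have : Q⁻¹ = P⁻¹ - η := by rw [h]; ring
          rw [one_div, this]
          field_simp
          ring
        rw [hD, ← add_assoc]
        exact ennreal_young3 a b c0 hQgt htgt hugt hsum
  -- measurability
  have hconjmeas : Measurable (conjExp p) := by
    refine Measurable.ite (hpmeas (measurableSet_singleton ∞)) measurable_const ?_
    exact hpmeas.div (hpmeas.sub measurable_const)
  have hmeas1 : Measurable fun x => (ω x / lam1) ^ (q x).toReal :=
    (hωmeas.div measurable_const).pow hqmeas.ennreal_toReal
  set ind : X → ℝ≥0∞ := {x : X | p x ≠ 1}.indicator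
      (fun y => ((ω y)⁻¹ / lam2) ^ (conjExp p y).toReal) with hinddef
  have hmeas2 : Measurable ind := by
    refine Measurable.indicator ?_ hp1mc
    exact (hωmeas.inv.div measurable_const).pow hconjmeas.ennreal_toReal
  -- piece bounds
  have b1 : ∫⁻ x in E, (ω x / lam1) ^ (q x).toReal ∂μ ≤ 1 := by
    rw [← lintegral_indicator hEm]
    refine le_trans (le_of_eq (lintegral_congr fun x => ?_)) I₁
    by_cases hx : x ∈ E
    · rw [indicator_of_mem hx, indicator_of_mem hx]
    · rw [indicator_of_notMem hx, indicator_of_notMem hx]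
      rw [ENNReal.zero_div, ENNReal.zero_rpow_of_pos
        (show (0:ℝ) < (q x).toReal by linarith [hQ1 x])]
  have b2 : ∫⁻ x in E, ind x ∂μ ≤ 1 := by
    rw [← lintegral_indicator hEm]
    have hii : ∀ x, E.indicator ind x =
        (E ∩ {x : X | p x ≠ 1}).indicator (fun y => ((ω y)⁻¹ / lam2) ^ (conjExp p y).toReal) x := by
      intro x
      rw [hinddef, Set.indicator_indicator]
    rw [lintegral_congr hii, lintegral_indicator (hEm.inter hp1mc)]
    have congrstep : ∫⁻ x in E ∩ {x : X | p x ≠ 1}, ((ω x)⁻¹ / lam2) ^ (conjExp p x).toReal ∂μ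
        = ∫⁻ x in E ∩ {x : X | p x ≠ 1},
            ((B.indicator (fun y => (ω y)⁻¹) x) / lam2) ^ (conjExp p x).toReal ∂μ := by
      refine setLIntegral_congr_fun (hEm.inter hp1mc) (fun x hx => ?_)
      rw [indicator_of_mem (hEB hx.1)]
    rw [congrstep]
    exact le_trans (lintegral_mono' (Measure.restrict_mono inter_subset_right le_rfl) le_rfl) I₂
  have b3 : ∫⁻ _ in E, D ∂μ ≤ 1 := by
    rw [setLIntegral_const]
    by_cases hη : η = 0
    · simp [hDdef, if_pos hη]
    · have hexp : (-η) * (1/η) = -1 := by field_simp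
      rw [hDdef, if_neg hη, hc0def, ← ENNReal.rpow_mul, hexp, ENNReal.rpow_neg_one]
      exact le_of_eq (ENNReal.inv_mul_cancel hμE0.ne' hμEfin)
  -- the main integral bound
  have main : ∫⁻ x in E, (ω x / lam1) * ((ω x)⁻¹ / lam2) * c0 ∂μ ≤ 3 := by
    refine le_trans (lintegral_mono_ae ((ae_restrict_iff' hEm).2 claim)) ?_
    have hadd : ∫⁻ x in E, ((ω x / lam1) ^ (q x).toReal + (ind x + D)) ∂μ
        = (∫⁻ x in E, (ω x / lam1) ^ (q x).toReal ∂μ) +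
          ((∫⁻ x in E, ind x ∂μ) + ∫⁻ _ in E, D ∂μ) := by
      rw [lintegral_add_left hmeas1, lintegral_add_left hmeas2]
    rw [hadd]
    calc (∫⁻ x in E, (ω x / lam1) ^ (q x).toReal ∂μ) +
          ((∫⁻ x in E, ind x ∂μ) + ∫⁻ _ in E, D ∂μ) ≤ 1 + (1 + 1) :=
        add_le_add b1 (add_le_add b2 b3)
      _ = 3 := by norm_num
  -- identify the integrand as a constant
  have hprod0 : lam1 * lam2 * T ≠ 0 :=
    mul_ne_zero (mul_ne_zero hl10.ne' hl20.ne') hT0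
  have hprodfin : lam1 * lam2 * T ≠ ∞ :=
    ENNReal.mul_ne_top (ENNReal.mul_ne_top hl1fin hl2fin) hTfin
  have heq : ∫⁻ x in E, (ω x / lam1) * ((ω x)⁻¹ / lam2) * c0 ∂μ = (lam1 * lam2 * T)⁻¹ * μ E := by
    have hptws : ∀ᵐ x ∂μ.restrict E,
        (ω x / lam1) * ((ω x)⁻¹ / lam2) * c0 = (lam1 * lam2 * T)⁻¹ := by
      refine ae_restrict_of_ae (hωae.mono fun x hx => ?_)
      obtain ⟨hx0, hxfin⟩ := hx
      rw [div_eq_mul_inv, div_eq_mul_inv]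
      calc ω x * lam1⁻¹ * ((ω x)⁻¹ * lam2⁻¹) * c0
          = (ω x * (ω x)⁻¹) * (lam1⁻¹ * (lam2⁻¹ * c0)) := by ring
        _ = lam1⁻¹ * (lam2⁻¹ * T⁻¹) := by
            rw [ENNReal.mul_inv_cancel hx0.ne' hxfin.ne, one_mul]
            congr 2
            rw [hc0def, hTdef, ENNReal.rpow_neg]
        _ = (lam1 * lam2 * T)⁻¹ := by
            rw [ENNReal.mul_inv (Or.inl (mul_ne_zero hl10.ne' hl20.ne')) (Or.inr hT0),
              ENNReal.mul_inv (Or.inl hl10.ne') (Or.inr hl20.ne'), mul_assoc]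
    rw [lintegral_congr_ae hptws, setLIntegral_const]
  calc μ E = (lam1 * lam2 * T) * ((lam1 * lam2 * T)⁻¹ * μ E) := by
        rw [← mul_assoc, ENNReal.mul_inv_cancel hprod0 hprodfin, one_mul]
    _ = (lam1 * lam2 * T) * ∫⁻ x in E, (ω x / lam1) * ((ω x)⁻¹ / lam2) * c0 ∂μ := by rw [heq]
    _ ≤ (lam1 * lam2 * T) * 3 := mul_le_mul_right main _
    _ = 3 * (lam1 * lam2 * T) := mul_comm _ _


/-- For `ω ∈ A_{p(·),q(·)}`:
`(μ(E)/μ(B))^{1−η} ≤ C·[ω]·‖ωχ_E‖_{q(·)}/‖ωχ_B‖_{q(·)}`. -/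
theorem statement7 {X : Type*} [MeasurableSpace X]
    (d : X → X → ℝ) (A0 : ℝ) (μ : Measure X) (Cμ : ℝ≥0∞)
    (hd : IsQuasiMetric d A0)
    (hball : ∀ (c : X) (r : ℝ), MeasurableSet (qball d c r))
    (hdbl : IsDoubling d μ Cμ)
    (η : ℝ) (hη0 : 0 ≤ η) (hη1 : η < 1)
    (p q : X → ℝ≥0∞) (hp : MemP1 μ p) (hq : MemP1 μ q)
    (hpq : ∀ x, (p x)⁻¹ = (q x)⁻¹ + ENNReal.ofReal η)
    (ω : X → ℝ≥0∞) (hω : IsWeight d μ ω)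
    (hA : ApqConst d μ η p q ω ≠ ∞) :
    ∃ C : ℝ≥0∞, C ≠ ∞ ∧ ∀ (c : X) (r : ℝ), 0 < r →
      ∀ E ⊆ qball d c r, MeasurableSet E →
        (μ E / μ (qball d c r)) ^ (1 - η) ≤
          C * ApqConst d μ η p q ω *
            (luxNorm μ q (E.indicator ω) /
              luxNorm μ q ((qball d c r).indicator ω)) := by
  obtain ⟨hpmeas, hp1, hpfin, -⟩ := hp
  obtain ⟨hqmeas, hq1, hqfin, -⟩ := hq
  obtain ⟨hωmeas, hωae, -⟩ := hω
  refine ⟨12, by norm_num, fun c r hr E hEB hEm => ?_⟩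
  set B : Set X := qball d c r with hBdef
  have hBm : MeasurableSet B := hball c r
  have hμB0 : 0 < μ B := by
    have h := (hdbl.2 c (r/2) (by linarith)).1
    rwa [show 2 * (r/2) = r by ring] at h
  have hμBfin : μ B ≠ ∞ := by
    obtain ⟨-, h2, h3⟩ := hdbl.2 c r hr
    have hsub : B ⊆ qball d c (2*r) := fun x hx =>
      show d c x < 2*r from lt_of_lt_of_le hx (by linarith)
    exact (lt_of_le_of_lt (le_trans (measure_mono hsub) h2) h3).ne
  have hωpos : ∀ᵐ x ∂μ, 0 < ω x := hωae.mono fun x h => h.1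
  have hωinvpos : ∀ᵐ x ∂μ, 0 < (ω x)⁻¹ := hωae.mono fun x h => ENNReal.inv_pos.2 h.2.ne
  have hqtopset : {x : X | q x = ∞} = ∅ := by
    ext x; simp [hqfin x]
  have hqSm : MeasurableSet {x : X | q x = ∞} := by
    rw [hqtopset]; exact MeasurableSet.empty
  have hpset : {x : X | conjExp p x = ∞} = {x : X | p x = 1} := by
    ext x; exact conjExp_eq_top_iff hp1 hpfin x
  have hpSm : MeasurableSet {x : X | conjExp p x = ∞} := by
    rw [hpset]; exact hpmeas (measurableSet_singleton 1)
  set nB := luxNorm μ q (B.indicator ω) with hnBdef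
  set nB' := luxNorm μ (conjExp p) (B.indicator fun x => (ω x)⁻¹) with hnB'def
  obtain ⟨δ₁, hδ₁0, hδ₁1, hδ₁⟩ := exists_pos_level hωpos hμB0
  have hnB0 : 0 < nB := luxNorm_pos hq1 hqSm (hωmeas.indicator hBm) hδ₁0 hδ₁1 hδ₁
  obtain ⟨δ₂, hδ₂0, hδ₂1, hδ₂⟩ := exists_pos_level hωinvpos hμB0
  have hnB'0 : 0 < nB' :=
    luxNorm_pos (one_le_conjExp hp1) hpSm (hωmeas.inv.indicator hBm) hδ₂0 hδ₂1 hδ₂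
  have hApq : μ B ^ (η - 1) * nB * nB' ≤ ApqConst d μ η p q ω := by
    rw [ApqConst]
    refine le_iSup_of_le c (le_iSup_of_le r (le_iSup_of_le hr le_rfl))
  have hμBpow0 : μ B ^ (η - 1) ≠ 0 := (ENNReal.rpow_pos hμB0 hμBfin).ne'
  have hμBpowfin : μ B ^ (η - 1) ≠ ∞ := by
    rw [show η - 1 = -(1 - η) by ring, ENNReal.rpow_neg]
    exact ENNReal.inv_ne_top.2 (ENNReal.rpow_pos hμB0 hμBfin).ne'
  have hprodfin : μ B ^ (η - 1) * nB * nB' ≠ ∞ := ne_top_of_le_ne_top hA hApq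
  have hnBfin : nB ≠ ∞ := by
    intro h
    apply hprodfin
    rw [h, ENNReal.mul_top hμBpow0, ENNReal.top_mul hnB'0.ne']
  have hnB'fin : nB' ≠ ∞ := by
    intro h
    apply hprodfin
    rw [h, ENNReal.mul_top (mul_ne_zero hμBpow0 hnB0.ne')]
  rcases eq_or_ne (μ E) 0 with hμE | hμE
  · rw [hμE, ENNReal.zero_div, ENNReal.zero_rpow_of_pos (by linarith)]
    exact zero_le
  have hμE0 : 0 < μ E := pos_iff_ne_zero.2 hμE
  have hμEfin : μ E ≠ ∞ := ne_top_of_le_ne_top hμBfin (measure_mono hEB)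
  set nE := luxNorm μ q (E.indicator ω) with hnEdef
  have hnEle : nE ≤ nB :=
    luxNorm_mono fun x => Set.indicator_le_indicator_of_subset hEB (fun y => zero_le) x
  have hnEfin : nE ≠ ∞ := ne_top_of_le_ne_top hnBfin hnEle
  obtain ⟨δ₃, hδ₃0, hδ₃1, hδ₃⟩ := exists_pos_level hωpos hμE0
  have hnE0 : 0 < nE := luxNorm_pos hq1 hqSm (hωmeas.indicator hEm) hδ₃0 hδ₃1 hδ₃
  have hm1 := two_mul_luxNorm_mem hnE0 hnEfin
  have hm2 := two_mul_luxNorm_mem hnB'0 hnB'fin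
  have hkey := key_ineq hη0 hη1 hp1 hpfin hq1 hqfin hpq hωmeas hωae hqmeas hpmeas
    hBm hEm hEB hμE0 hμEfin hm1 hm2
    (ENNReal.mul_ne_top (by simp) hnEfin) (ENNReal.mul_ne_top (by simp) hnB'fin)
  have hkey' : μ E ≤ 12 * (nE * nB' * μ E ^ η) := by
    refine le_trans hkey (le_of_eq ?_)
    ring
  have hT0 : (μ E ^ η) ≠ 0 := (ENNReal.rpow_pos hμE0 hμEfin).ne'
  have hTfin : (μ E ^ η) ≠ ∞ := ENNReal.rpow_ne_top_of_nonneg hη0 hμEfin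
  have hkey2 : μ E ^ (1 - η) ≤ 12 * (nE * nB') := by
    have h1 : μ E ^ (1 - η) = μ E * (μ E ^ η)⁻¹ := by
      rw [show (1:ℝ) - η = 1 + (-η) by ring, ENNReal.rpow_add _ _ hμE0.ne' hμEfin,
        ENNReal.rpow_one, ENNReal.rpow_neg]
    rw [h1]
    calc μ E * (μ E ^ η)⁻¹ ≤ (12 * (nE * nB' * μ E ^ η)) * (μ E ^ η)⁻¹ :=
          mul_le_mul_left hkey' _
      _ = 12 * (nE * nB') * (μ E ^ η * (μ E ^ η)⁻¹) := by ring
      _ = 12 * (nE * nB') := by rw [ENNReal.mul_inv_cancel hT0 hTfin, mul_one]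
  have hnB'le : nB' ≤ ApqConst d μ η p q ω * (μ B ^ (1 - η) * nB⁻¹) := by
    have h1 : μ B ^ (η - 1) * μ B ^ (1 - η) = 1 := by
      rw [← ENNReal.rpow_add _ _ hμB0.ne' hμBfin]
      norm_num
    have hcancel : (μ B ^ (η - 1) * nB) * (μ B ^ (1 - η) * nB⁻¹) = 1 := by
      calc (μ B ^ (η - 1) * nB) * (μ B ^ (1 - η) * nB⁻¹)
          = (μ B ^ (η - 1) * μ B ^ (1 - η)) * (nB * nB⁻¹) := by ring
        _ = 1 := by rw [h1, ENNReal.mul_inv_cancel hnB0.ne' hnBfin, one_mul]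
    calc nB' = ((μ B ^ (η - 1) * nB) * (μ B ^ (1 - η) * nB⁻¹)) * nB' := by
          rw [hcancel, one_mul]
      _ = (μ B ^ (η - 1) * nB * nB') * (μ B ^ (1 - η) * nB⁻¹) := by ring
      _ ≤ ApqConst d μ η p q ω * (μ B ^ (1 - η) * nB⁻¹) := mul_le_mul_left hApq _
  have hBpow0 : μ B ^ (1 - η) ≠ 0 := (ENNReal.rpow_pos hμB0 hμBfin).ne'
  have hBpowfin : μ B ^ (1 - η) ≠ ∞ :=
    ENNReal.rpow_ne_top_of_nonneg (by linarith) hμBfin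
  calc (μ E / μ B) ^ (1 - η) = μ E ^ (1 - η) * (μ B ^ (1 - η))⁻¹ := by
        rw [ENNReal.div_rpow_of_nonneg _ _ (by linarith), div_eq_mul_inv]
    _ ≤ (12 * (nE * nB')) * (μ B ^ (1 - η))⁻¹ := mul_le_mul_left hkey2 _
    _ ≤ (12 * (nE * (ApqConst d μ η p q ω * (μ B ^ (1 - η) * nB⁻¹)))) * (μ B ^ (1 - η))⁻¹ := by
        refine mul_le_mul_left (mul_le_mul_right (mul_le_mul_right hnB'le _) _) _
    _ = 12 * ApqConst d μ η p q ω * (nE * nB⁻¹) * (μ B ^ (1 - η) * (μ B ^ (1 - η))⁻¹) := by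
        ring
    _ = 12 * ApqConst d μ η p q ω * (nE / nB) := by
        rw [ENNReal.mul_inv_cancel hBpow0 hBpowfin, mul_one, div_eq_mul_inv]

end
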